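/- Let G be a finite abelian group of exponent n with A = {1,...,n-1}, and let S = g_1 ⋯ g_m be a sequence over G containing a maximal A-weighted zero-sum free subsequence T of length strictly less than D_A(G) − 1 (where maximality is among A-weighted zero-sum free subsequences of S), and assume G = H ⊕ C_n^r with exp(H) < n so D_A(G) = r+1. Then N_{A,0}(S) > 2^{|S| − D_A(G) + 1}, i.e., S is strictly above the extremal bound. -/

import Mathlib

open Finset

/-- `I` is an index set carrying an `A`-weighted zero sum of `g` (the empty set counts). -/
def IsWZSum {G ι : Type*} [Fintype ι] [AddCommGroup G] (A : Set ℤ) (g : ι → G)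
    (I : Finset ι) : Prop :=
  ∃ a : ι → ℤ, (∀ i ∈ I, a i ∈ A) ∧ ∑ i ∈ I, a i • g i = 0

/-- `N_{A,0}(S)`: the number of subsets of the index set carrying an `A`-weighted zero sum. -/
noncomputable def NZero {G ι : Type*} [Fintype ι] [AddCommGroup G] (A : Set ℤ) (g : ι → G) : ℕ :=
  Set.ncard {I : Finset ι | IsWZSum A g I}

/-- The subsequence of `g` indexed by `J` is `A`-weighted zero-sum free. -/
def IsZSFree {G ι : Type*} [Fintype ι] [AddCommGroup G] (A : Set ℤ) (g : ι → G)
    (J : Finset ι) : Prop :=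
  ∀ I ⊆ J, I.Nonempty → ¬ IsWZSum A g I

/-- The `A`-weighted Davenport constant of `G`. -/
noncomputable def DavenportW (A : Set ℤ) (G : Type*) [AddCommGroup G] : ℕ :=
  sInf {l : ℕ | 0 < l ∧ ∀ g : Fin l → G, ∃ I : Finset (Fin l), I.Nonempty ∧ IsWZSum A g I}

theorem stmt15 (H : Type*) [AddCommGroup H] [Finite H] (n r : ℕ)
    (hexpH : AddMonoid.exponent H < n)
    (hexp : AddMonoid.exponent (H × (Fin r → ZMod n)) = n)
    (hDav : DavenportW (Set.Icc 1 ((n : ℤ) - 1)) (H × (Fin r → ZMod n)) = r + 1)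
    (m : ℕ) (g : Fin m → H × (Fin r → ZMod n)) (It : Finset (Fin m))
    (hzsf : IsZSFree (Set.Icc 1 ((n : ℤ) - 1)) g It)
    (hmax : ∀ J : Finset (Fin m),
      IsZSFree (Set.Icc 1 ((n : ℤ) - 1)) g J → J.card ≤ It.card)
    (hcard : It.card + 1 <
      DavenportW (Set.Icc 1 ((n : ℤ) - 1)) (H × (Fin r → ZMod n))) :
    (2 : ℚ) ^ ((m : ℤ) + 1 -
        (DavenportW (Set.Icc 1 ((n : ℤ) - 1)) (H × (Fin r → ZMod n)) : ℤ))
      < (NZero (Set.Icc 1 ((n : ℤ) - 1)) g : ℚ) := by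
  classical
  set A := Set.Icc 1 ((n : ℤ) - 1) with hAdef
  set D := DavenportW A (H × (Fin r → ZMod n)) with hDdef
  -- n ≥ 2
  have hn2 : 2 ≤ n := by
    have h1 : AddMonoid.exponent H ≠ 0 := AddMonoid.exponent_ne_zero_of_finite
    omega
  -- n • x = 0 for all x
  have hnsmul : ∀ x : H × (Fin r → ZMod n), (n : ℤ) • x = 0 := by
    intro x
    have h := AddMonoid.exponent_nsmul_eq_zero x
    rw [hexp] at h
    rw [natCast_zsmul]
    exact h
  have hdvd_smul : ∀ (k : ℤ) (x : H × (Fin r → ZMod n)), (n : ℤ) ∣ k → k • x = 0 := by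
    rintro k x ⟨t, rfl⟩
    rw [mul_comm, mul_zsmul, hnsmul, smul_zero]
  -- for each i ∉ It, a completion of g i to a weighted zero sum using It
  have key : ∀ i ∉ It, ∃ a : Fin m → ℤ, (∀ j, j ∉ insert i It → a j = 0) ∧
      (∀ j, a j ≠ 0 → a j ∈ A) ∧ a i ≠ 0 ∧ ∑ j, a j • g j = 0 := by
    intro i hi
    have hnot : ¬ IsZSFree A g (insert i It) := by
      intro h
      have := hmax _ h
      rw [Finset.card_insert_of_notMem hi] at this
      omega
    rw [IsZSFree] at hnot
    push_neg at hnot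
    obtain ⟨I, hIsub, hIne, b, hbA, hbsum⟩ := hnot
    have hiI : i ∈ I := by
      by_contra hiI
      exact hzsf I (fun j hj => (Finset.mem_insert.mp (hIsub hj)).resolve_left
        (fun h => hiI (h ▸ hj))) hIne ⟨b, hbA, hbsum⟩
    refine ⟨fun j => if j ∈ I then b j else 0, ?_, ?_, ?_, ?_⟩
    · intro j hj
      simp only [if_neg (fun h : j ∈ I => hj (hIsub h))]
    · intro j hj
      by_cases h : j ∈ I
      · simpa [h] using hbA j h
      · simp [h] at hj
    · have := hbA i hiI
      rw [hAdef, Set.mem_Icc] at this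
      simp only [if_pos hiI]
      omega
    · have heq : ∑ j, (if j ∈ I then b j else 0) • g j
          = ∑ j ∈ I, (if j ∈ I then b j else 0) • g j :=
        (Finset.sum_subset (Finset.subset_univ I) (fun j _ hj => by simp [hj])).symm
      rw [heq]
      exact (Finset.sum_congr rfl (fun j hj => by simp [hj])).trans hbsum
  choose! a ha0 haA hai hasum using key
  -- main construction
  have main : ∀ J ⊆ Itᶜ, ∃ IJ : Finset (Fin m), IsWZSum A g IJ ∧ IJ ∩ Itᶜ = J := by
    intro J hJ
    set c : Fin m → ℤ := fun j => ∑ i ∈ J, a i j with hc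
    have hJc : ∀ i ∈ J, i ∉ It := fun i hi => Finset.mem_compl.mp (hJ hi)
    have hcJ : ∀ j ∈ J, c j = a j j := by
      intro j hj
      rw [hc]
      refine Finset.sum_eq_single j (fun i hi hij => ?_) (fun h => absurd hj h)
      refine ha0 i (hJc i hi) j ?_
      simp only [Finset.mem_insert]
      push_neg
      exact ⟨fun h => hij (h.symm), fun h => hJc j hj h⟩
    have hc0 : ∀ j, j ∉ J → j ∉ It → c j = 0 := by
      intro j hjJ hjI
      refine Finset.sum_eq_zero (fun i hi => ha0 i (hJc i hi) j ?_)
      simp only [Finset.mem_insert]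
      push_neg
      exact ⟨fun h => hjJ (h ▸ hi), hjI⟩
    have hcsum : ∑ j, c j • g j = 0 := by
      simp only [hc, Finset.sum_smul]
      rw [Finset.sum_comm]
      exact Finset.sum_eq_zero (fun i hi => hasum i (hJc i hi))
    set IJ : Finset (Fin m) := J ∪ It.filter (fun j => ¬ ((n : ℤ) ∣ c j)) with hIJ
    have hint : IJ ∩ Itᶜ = J := by
      ext j
      simp only [hIJ, Finset.mem_inter, Finset.mem_union, Finset.mem_filter,
        Finset.mem_compl]
      constructor
      · rintro ⟨h1 | h1, h2⟩
        · exact h1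
        · exact absurd h1.1 h2
      · exact fun h => ⟨Or.inl h, hJc j h⟩
    refine ⟨IJ, ⟨fun j => c j % (n : ℤ), ?_, ?_⟩, hint⟩
    · intro j hjIJ
      dsimp only
      rw [hIJ, Finset.mem_union] at hjIJ
      rcases hjIJ with hj | hj
      · have h1 : a j j ∈ A := haA j (hJc j hj) j (hai j (hJc j hj))
        rw [hAdef, Set.mem_Icc] at h1 ⊢
        rw [hcJ j hj, Int.emod_eq_of_lt (by omega) (by omega)]
        omega
      · rw [Finset.mem_filter] at hj
        have h1 : 0 ≤ c j % (n : ℤ) := Int.emod_nonneg _ (by positivity)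
        have h2 : c j % (n : ℤ) < n := Int.emod_lt_of_pos _ (by positivity)
        have h3 : c j % (n : ℤ) ≠ 0 := fun h => hj.2 (Int.dvd_of_emod_eq_zero h)
        rw [hAdef, Set.mem_Icc]
        omega
    · dsimp only
      have heq : ∀ j ∈ IJ, (c j % (n : ℤ)) • g j = c j • g j := by
        intro j _
        have h4 : c j % (n : ℤ) = c j - (n : ℤ) * (c j / n) := by
          rw [Int.emod_def]
        rw [h4, sub_smul, hdvd_smul ((n : ℤ) * (c j / n)) (g j) ⟨_, rfl⟩,
          sub_zero]
      rw [Finset.sum_congr rfl heq]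
      rw [Finset.sum_subset (Finset.subset_univ IJ) ?_]
      · exact hcsum
      · intro j _ hj
        rw [hIJ, Finset.mem_union, Finset.mem_filter] at hj
        push_neg at hj
        by_cases hjI : j ∈ It
        · exact hdvd_smul _ _ (hj.2 hjI)
        · rw [hc0 j hj.1 hjI, zero_smul]
  choose! F hF1 hF2 using main
  -- counting
  have hfin : {I : Finset (Fin m) | IsWZSum A g I}.Finite := Set.toFinite _
  have hinj : Set.InjOn F Itᶜ.powerset := by
    intro J1 h1 J2 h2 hF
    rw [Finset.mem_coe, Finset.mem_powerset] at h1 h2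
    rw [← hF2 J1 h1, ← hF2 J2 h2, hF]
  have hcount : 2 ^ (m - It.card) ≤ NZero A g := by
    rw [NZero, Set.ncard_eq_toFinset_card _ hfin]
    have hle : Itᶜ.powerset.card ≤ hfin.toFinset.card :=
      Finset.card_le_card_of_injOn (t := hfin.toFinset) F
        (fun J hJ => by
          rw [Finset.mem_coe, Set.Finite.mem_toFinset]
          exact hF1 J (Finset.mem_powerset.mp hJ)) hinj
    calc 2 ^ (m - It.card) = Itᶜ.powerset.card := by
          rw [Finset.card_powerset, Finset.card_compl, Fintype.card_fin]
      _ ≤ _ := hle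
  -- final arithmetic
  have hItm : It.card ≤ m := by
    have := Finset.card_le_card (Finset.subset_univ It)
    simpa using this
  have hDge : It.card + 2 ≤ D := hcard
  have step1 : (2 : ℚ) ^ ((m : ℤ) + 1 - (D : ℤ)) < (2 : ℚ) ^ ((m - It.card : ℕ) : ℤ) := by
    refine zpow_lt_zpow_right₀ one_lt_two ?_
    have : ((m - It.card : ℕ) : ℤ) = (m : ℤ) - It.card := by omega
    omega
  calc (2 : ℚ) ^ ((m : ℤ) + 1 - (D : ℤ)) < (2 : ℚ) ^ ((m - It.card : ℕ) : ℤ) := step1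
    _ = ((2 ^ (m - It.card) : ℕ) : ℚ) := by push_cast [zpow_natCast]; ring
    _ ≤ (NZero A g : ℚ) := by exact_mod_cast hcount
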